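/- Let Π be a Borel measure on ℝ^m satisfying the wide cone condition. Then the cone aperture can be chosen uniformly in the axis: there exists a single ϱ ∈ (0,1) such that Π(V(v,ϱ)) = +∞ for every v ∈ S_m. -/
import Mathlib


open scoped RealInnerProductSpace ENNReal
open MeasureTheory Filter Set

/-- If a measure on `ℝ^m` satisfies the wide cone condition, then the cone aperture can be
chosen uniformly in the axis. -/
theorem wide_cone_uniform_aperture (m : ℕ) (μ : Measure (EuclideanSpace ℝ (Fin m)))
    (hwc : ∀ v : EuclideanSpace ℝ (Fin m), ‖v‖ = 1 →
      ∃ ϱ ∈ Set.Ioo (0:ℝ) 1, μ {y | ϱ * ‖y‖ ≤ |⟪y, v⟫|} = ⊤) :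
    ∃ ϱ ∈ Set.Ioo (0:ℝ) 1, ∀ v : EuclideanSpace ℝ (Fin m), ‖v‖ = 1 →
      μ {y | ϱ * ‖y‖ ≤ |⟪y, v⟫|} = ⊤ := by
  classical
  set E := EuclideanSpace ℝ (Fin m)
  have hwc' : ∀ v : Metric.sphere (0:E) 1,
      ∃ ϱ ∈ Set.Ioo (0:ℝ) 1, μ {y | ϱ * ‖y‖ ≤ |⟪y, (v:E)⟫|} = ⊤ := fun v =>
    hwc v (mem_sphere_zero_iff_norm.1 v.2)
  choose ϱ hϱ hμ using hwc'
  have hcover : (Metric.sphere (0:E) 1) ⊆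
      ⋃ v : Metric.sphere (0:E) 1, Metric.ball (v:E) (ϱ v / 2) := by
    intro x hx
    exact mem_iUnion.2 ⟨⟨x, hx⟩, by
      simp only [Metric.mem_ball, dist_self]
      exact half_pos (hϱ ⟨x, hx⟩).1⟩
  obtain ⟨t, ht⟩ := (isCompact_sphere (0:E) 1).elim_finite_subcover
    (fun v : Metric.sphere (0:E) 1 => Metric.ball (v:E) (ϱ v / 2))
    (fun _ => Metric.isOpen_ball) hcover
  set F : Finset ℝ := insert (1/2) (t.image (fun v => ϱ v / 2)) with hF
  have hFne : F.Nonempty := ⟨1/2, Finset.mem_insert_self _ _⟩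
  set r := F.min' hFne with hr
  have hrmem : r ∈ F := F.min'_mem hFne
  have hrpos : 0 < r := by
    rcases Finset.mem_insert.1 hrmem with h | h
    · rw [h]; norm_num
    · obtain ⟨v, _, hv⟩ := Finset.mem_image.1 h
      rw [← hv]; exact half_pos (hϱ v).1
  have hrle : r ≤ 1/2 := F.min'_le _ (Finset.mem_insert_self _ _)
  refine ⟨r, ⟨hrpos, lt_of_le_of_lt hrle (by norm_num)⟩, ?_⟩
  intro w hw
  have hwS : w ∈ Metric.sphere (0:E) 1 := by simpa [mem_sphere_zero_iff_norm] using hw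
  obtain ⟨v, hvt, hwv⟩ := mem_iUnion₂.1 (ht hwS)
  have hrv : r ≤ ϱ v / 2 :=
    F.min'_le _ (Finset.mem_insert_of_mem (Finset.mem_image_of_mem _ hvt))
  have hdist : ‖(v:E) - w‖ < ϱ v / 2 := by
    rw [← dist_eq_norm, dist_comm]
    exact Metric.mem_ball.1 hwv
  have hsub : {y : E | ϱ v * ‖y‖ ≤ |⟪y, (v:E)⟫|} ⊆ {y : E | r * ‖y‖ ≤ |⟪y, w⟫|} := by
    intro y hy
    simp only [Set.mem_setOf_eq] at hy ⊢
    have h1 : |⟪y, (v:E)⟫ - ⟪y, w⟫| ≤ ‖y‖ * ‖(v:E) - w‖ := by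
      rw [← inner_sub_right]; exact abs_real_inner_le_norm _ _
    have hyn : (0:ℝ) ≤ ‖y‖ := norm_nonneg y
    have h2 : ‖y‖ * ‖(v:E) - w‖ ≤ ‖y‖ * (ϱ v / 2) :=
      mul_le_mul_of_nonneg_left hdist.le hyn
    have h3 : |⟪y, (v:E)⟫| - |⟪y, w⟫| ≤ |⟪y, (v:E)⟫ - ⟪y, w⟫| := abs_sub_abs_le_abs_sub _ _
    nlinarith [mul_le_mul_of_nonneg_right hrv hyn]
  have := measure_mono (μ := μ) hsub
  rw [hμ v] at this
  exact top_le_iff.1 this
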